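/- Let X₁, X₂ ∈ ℝ^{Z_N}, let Y_ℓ = X₂(ℓ+1) − X₁(ℓ), and define T and D as in the positive-temperature discrete periodic Pitman transform. Then for every i ∈ Z_N: e^{−D(X₁,X₂)(i)} + e^{−T(X₁,X₂)(i+1)} = e^{−X₁(i)} + e^{−X₂(i+1)}. -/

import Mathlib

open Finset Real

variable {N : ℕ}

/-- Cyclic sum `Y_{[i,j]}` (closed-closed), going from `i` around to `j`. -/
noncomputable def cycCC [NeZero N] (Y : ZMod N → ℝ) (i j : ZMod N) : ℝ :=
  ∑ ℓ ∈ Finset.range ((j - i).val + 1), Y (i + ℓ)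

/-- Cyclic sum `Y_{(i,j]}` (open-closed), with `Y_{(i,i]} = 0`. -/
noncomputable def cycOC [NeZero N] (Y : ZMod N → ℝ) (i j : ZMod N) : ℝ :=
  ∑ ℓ ∈ Finset.range ((j - i).val), Y (i + 1 + ℓ)

/-- `Y_ℓ = X₂(ℓ+1) − X₁(ℓ)`. -/
noncomputable def Yv [NeZero N] (X₁ X₂ : ZMod N → ℝ) : ZMod N → ℝ :=
  fun ℓ => X₂ (ℓ + 1) - X₁ ℓ

/-- Positive-temperature periodic Pitman map `T`. -/
noncomputable def Tmap [NeZero N] (X₁ X₂ : ZMod N → ℝ) (i : ZMod N) : ℝ :=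
  X₁ (i - 1) + Real.log ((∑ j : ZMod N, Real.exp (cycCC (Yv X₁ X₂) (i - 1) j)) /
    (∑ j : ZMod N, Real.exp (cycCC (Yv X₁ X₂) i j)))

/-- Positive-temperature periodic Pitman map `D`. -/
noncomputable def Dmap [NeZero N] (X₁ X₂ : ZMod N → ℝ) (i : ZMod N) : ℝ :=
  X₂ (i + 1) + Real.log ((∑ j : ZMod N, Real.exp (cycOC (Yv X₁ X₂) i j)) /
    (∑ j : ZMod N, Real.exp (cycOC (Yv X₁ X₂) (i - 1) j)))

/-- Zero-temperature periodic Pitman map `T̃`. -/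
noncomputable def Tz [NeZero N] (X₁ X₂ : ZMod N → ℝ) (i : ZMod N) : ℝ :=
  X₁ (i - 1) + Finset.univ.sup' Finset.univ_nonempty (fun j => cycCC (Yv X₁ X₂) (i - 1) j)
    - Finset.univ.sup' Finset.univ_nonempty (fun j => cycCC (Yv X₁ X₂) i j)

/-- Zero-temperature periodic Pitman map `D̃`. -/
noncomputable def Dz [NeZero N] (X₁ X₂ : ZMod N → ℝ) (i : ZMod N) : ℝ :=
  X₂ (i + 1) + Finset.univ.sup' Finset.univ_nonempty (fun j => cycOC (Yv X₁ X₂) i j)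
    - Finset.univ.sup' Finset.univ_nonempty (fun j => cycOC (Yv X₁ X₂) (i - 1) j)
open Finset Real
variable {N : ℕ}

lemma zval_neg_one [NeZero N] : (-1 : ZMod N).val = N - 1 := by
  obtain ⟨n, rfl⟩ := Nat.exists_eq_succ_of_ne_zero (NeZero.ne N)
  simp [ZMod.val_neg_one n]

lemma zval_add_one [NeZero N] {a : ZMod N} (h : a ≠ -1) : (a + 1).val = a.val + 1 := by
  have hlt : a.val + 1 < N := by
    rcases lt_or_eq_of_le (Nat.succ_le_of_lt (ZMod.val_lt a)) with h' | h'
    · exact h'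
    · exfalso; apply h
      have h2 : a = ((a.val : ℕ) : ZMod N) := (ZMod.natCast_zmod_val a).symm
      rw [h2]
      have h3 : a.val = N - 1 := by omega
      rw [h3, ← zval_neg_one, ZMod.natCast_zmod_val]
  have h4 : a + 1 = ((a.val + 1 : ℕ) : ZMod N) := by
    push_cast [ZMod.natCast_zmod_val]; ring
  rw [h4, ZMod.val_cast_of_lt hlt]

lemma sum_shift [NeZero N] (f : ZMod N → ℝ) (i : ZMod N) :
    ∑ ℓ ∈ Finset.range N, f (i + ℓ) = ∑ x : ZMod N, f x := by
  refine Finset.sum_nbij' (fun ℓ => i + (ℓ : ZMod N)) (fun x => (x - i).val) ?_ ?_ ?_ ?_ ?_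
  · intros; exact Finset.mem_univ _
  · intro x _; exact Finset.mem_range.mpr (ZMod.val_lt _)
  · intro ℓ hℓ
    simp only [add_sub_cancel_left]
    exact ZMod.val_cast_of_lt (Finset.mem_range.mp hℓ)
  · intro x _; simp [ZMod.natCast_zmod_val]
  · intros; rfl

lemma cycCC_eq_add [NeZero N] (Y : ZMod N → ℝ) (i j : ZMod N) :
    cycCC Y i j = Y i + cycOC Y i j := by
  unfold cycCC cycOC
  rw [Finset.sum_range_succ']
  rw [add_comm]
  congr 1
  · simp
  · apply Finset.sum_congr rfl
    intro ℓ _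
    congr 1
    push_cast
    ring

lemma cycOC_pred [NeZero N] (Y : ZMod N → ℝ) {i j : ZMod N} (h : j ≠ i - 1) :
    cycOC Y (i - 1) j = cycCC Y i j := by
  unfold cycCC cycOC
  have h1 : j - (i - 1) = (j - i) + 1 := by ring
  have h2 : j - i ≠ -1 := fun hc => h (by rw [sub_eq_iff_eq_add] at hc; rw [hc]; ring)
  rw [h1, zval_add_one h2]
  apply Finset.sum_congr rfl
  intro ℓ _
  congr 1
  ring

lemma cycCC_full [NeZero N] (Y : ZMod N → ℝ) (i : ZMod N) :
    cycCC Y i (i - 1) = ∑ x : ZMod N, Y x := by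
  unfold cycCC
  have h1 : (i - 1 - i : ZMod N) = -1 := by ring
  have h2 : (i - 1 - i : ZMod N).val + 1 = N := by
    rw [h1, zval_neg_one]
    have := NeZero.ne N; omega
  rw [h2, sum_shift]

/-- `A_i = e^{Y i} * B_i` -/
lemma sumA_eq [NeZero N] (Y : ZMod N → ℝ) (i : ZMod N) :
    (∑ j : ZMod N, Real.exp (cycCC Y i j)) =
      Real.exp (Y i) * ∑ j : ZMod N, Real.exp (cycOC Y i j) := by
  rw [Finset.mul_sum]
  exact Finset.sum_congr rfl fun j _ => by rw [cycCC_eq_add, Real.exp_add]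

/-- `A_i = B_{i-1} - 1 + e^S` -/
lemma sumA_eq_sumB [NeZero N] (Y : ZMod N → ℝ) (i : ZMod N) :
    (∑ j : ZMod N, Real.exp (cycCC Y i j)) =
      (∑ j : ZMod N, Real.exp (cycOC Y (i - 1) j)) - 1 + Real.exp (∑ x : ZMod N, Y x) := by
  rw [← Finset.add_sum_erase _ _ (Finset.mem_univ (i - 1)),
      ← Finset.add_sum_erase _ (fun j => Real.exp (cycOC Y (i - 1) j)) (Finset.mem_univ (i - 1))]
  have h0 : cycOC Y (i - 1) (i - 1) = 0 := by
    unfold cycOC; simp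
  rw [cycCC_full, h0, Real.exp_zero]
  have : ∀ j ∈ Finset.univ.erase (i - 1),
      Real.exp (cycCC Y i j) = Real.exp (cycOC Y (i - 1) j) := by
    intro j hj
    rw [cycOC_pred Y (Finset.mem_erase.mp hj).1]
  rw [Finset.sum_congr rfl this]
  ring

theorem exp_neg_Dmap_add_exp_neg_Tmap [NeZero N] (X₁ X₂ : ZMod N → ℝ) (i : ZMod N) :
    Real.exp (-(Dmap X₁ X₂ i)) + Real.exp (-(Tmap X₁ X₂ (i + 1))) =
      Real.exp (-(X₁ i)) + Real.exp (-(X₂ (i + 1))) := by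
  have hadd : (i + 1 - 1 : ZMod N) = i := by ring
  have key : ∀ (x : ℝ) {p q : ℝ}, 0 < p → 0 < q →
      Real.exp (-(x + Real.log (p / q))) = Real.exp (-x) * (q / p) := by
    intro x p q hp hq
    rw [neg_add, Real.exp_add]
    congr 1
    rw [← Real.log_inv, Real.exp_log (by positivity), inv_div]
  set Y := Yv X₁ X₂ with hY
  have hB : ∀ k : ZMod N, 0 < ∑ j : ZMod N, Real.exp (cycOC Y k j) := fun k =>
    Finset.sum_pos (fun j _ => Real.exp_pos _) Finset.univ_nonempty
  have hA : ∀ k : ZMod N, 0 < ∑ j : ZMod N, Real.exp (cycCC Y k j) := fun k =>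
    Finset.sum_pos (fun j _ => Real.exp_pos _) Finset.univ_nonempty
  have hD : Real.exp (-(Dmap X₁ X₂ i)) =
      Real.exp (-(X₂ (i + 1))) * ((∑ j : ZMod N, Real.exp (cycOC Y (i - 1) j)) /
        (∑ j : ZMod N, Real.exp (cycOC Y i j))) := by
    unfold Dmap
    exact key _ (hB i) (hB (i - 1))
  have hT : Real.exp (-(Tmap X₁ X₂ (i + 1))) =
      Real.exp (-(X₁ i)) * ((∑ j : ZMod N, Real.exp (cycCC Y (i + 1) j)) /
        (∑ j : ZMod N, Real.exp (cycCC Y i j))) := by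
    unfold Tmap
    rw [hadd]
    exact key _ (hA i) (hA (i + 1))
  have hx : Real.exp (-(X₁ i)) = Real.exp (Y i) * Real.exp (-(X₂ (i + 1))) := by
    rw [← Real.exp_add, hY]
    simp only [Yv]
    ring_nf
  have e1 := sumA_eq Y i
  have e2 := sumA_eq_sumB Y i
  have e3 := sumA_eq_sumB Y (i + 1)
  rw [hadd] at e3
  have e2' : (∑ j : ZMod N, Real.exp (cycOC Y (i - 1) j)) =
      Real.exp (Y i) * (∑ j : ZMod N, Real.exp (cycOC Y i j)) + 1
        - Real.exp (∑ x : ZMod N, Y x) := by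
    rw [e1] at e2; linarith
  rw [hD, hT, hx, e2', e3, e1]
  have hb := hB i
  have hg := Real.exp_pos (Y i)
  rw [← mul_div_assoc, ← mul_div_assoc, div_add_div _ _ hb.ne' (mul_pos hg hb).ne',
    div_eq_iff (mul_pos hb (mul_pos hg hb)).ne']
  ring
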